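/- Let Ω ⊂ ℝ^n be a bounded domain with smooth boundary and u ∈ C^4(Ω̄). Then ∫_Ω (x·∇u + ((n-4)/2) u) Δ²u dx = ∫_{∂Ω} [ ((n-4)/2)(u ∂_ν(Δu) − Δu ∂_ν u) + (x·∇u) ∂_ν(Δu) − ∂_ν(x·∇u) Δu + (1/2)(Δu)^2 (x·ν) ] ds, where ν is the outward unit normal. -/

import Mathlib

open scoped RealInnerProductSpace
open MeasureTheory

/-- The Euclidean Laplacian of a real-valued function on `ℝⁿ`. -/
noncomputable def laplacian {n : ℕ} (f : EuclideanSpace ℝ (Fin n) → ℝ)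
    (x : EuclideanSpace ℝ (Fin n)) : ℝ :=
  ∑ i : Fin n, iteratedFDeriv ℝ 2 f x ![EuclideanSpace.single i 1, EuclideanSpace.single i 1]

/-- The Euclidean divergence of a vector field on `ℝⁿ`. -/
noncomputable def diverg {n : ℕ} (F : EuclideanSpace ℝ (Fin n) → EuclideanSpace ℝ (Fin n))
    (x : EuclideanSpace ℝ (Fin n)) : ℝ :=
  ∑ i : Fin n, fderiv ℝ F x (EuclideanSpace.single i 1) i

namespace PohozaevAux

variable {n : ℕ}

theorem grad_fderiv (f : EuclideanSpace ℝ (Fin n) → ℝ) (x v : EuclideanSpace ℝ (Fin n)) :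
    fderiv ℝ f x v = ⟪gradient f x, v⟫ := by
  simp [gradient, InnerProductSpace.toDual_symm_apply]

theorem fderiv_eval {G H : Type*} [NormedAddCommGroup G] [NormedSpace ℝ G]
    [NormedAddCommGroup H] [NormedSpace ℝ H]
    (A : EuclideanSpace ℝ (Fin n) → (G →L[ℝ] H)) (x v : EuclideanSpace ℝ (Fin n)) (w : G)
    (hA : DifferentiableAt ℝ A x) :
    fderiv ℝ (fun y => A y w) x v = fderiv ℝ A x v w := by
  rw [fderiv_clm_apply hA (differentiableAt_const w)]; simp

theorem fderiv_coord (F : EuclideanSpace ℝ (Fin n) → EuclideanSpace ℝ (Fin n))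
    (x v : EuclideanSpace ℝ (Fin n)) (i : Fin n) (hF : DifferentiableAt ℝ F x) :
    fderiv ℝ F x v i = fderiv ℝ (fun y => F y i) x v := by
  have h := ((EuclideanSpace.proj (𝕜 := ℝ) i).hasFDerivAt.comp x hF.hasFDerivAt).fderiv
  rw [show (fun y => F y i) = (EuclideanSpace.proj (𝕜 := ℝ) i) ∘ F from rfl, h]; rfl

theorem grad_coord (f : EuclideanSpace ℝ (Fin n) → ℝ) (x : EuclideanSpace ℝ (Fin n)) (i : Fin n) :
    gradient f x i = fderiv ℝ f x (EuclideanSpace.single i 1) := by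
  rw [grad_fderiv, EuclideanSpace.inner_single_right]; simp

theorem lap_eq (f : EuclideanSpace ℝ (Fin n) → ℝ) :
    laplacian f = fun y => ∑ i : Fin n,
      fderiv ℝ (fderiv ℝ f) y (EuclideanSpace.single i 1) (EuclideanSpace.single i 1) := by
  funext y; unfold laplacian
  exact Finset.sum_congr rfl (fun i _ => by rw [iteratedFDeriv_two_apply]; simp)

theorem contDiff_gradient (f : EuclideanSpace ℝ (Fin n) → ℝ) {m n' : WithTop ℕ∞}
    (hf : ContDiff ℝ n' f) (h : m + 1 ≤ n') : ContDiff ℝ m (gradient f) := by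
  rw [show gradient f
      = fun y => (InnerProductSpace.toDual ℝ (EuclideanSpace ℝ (Fin n))).symm (fderiv ℝ f y)
    from rfl]
  exact (InnerProductSpace.toDual ℝ (EuclideanSpace ℝ (Fin n))).symm.contDiff.comp
    (hf.fderiv_right h)

theorem diverg_smul (f : EuclideanSpace ℝ (Fin n) → ℝ)
    (G : EuclideanSpace ℝ (Fin n) → EuclideanSpace ℝ (Fin n))
    (x : EuclideanSpace ℝ (Fin n)) (hf : DifferentiableAt ℝ f x) (hG : DifferentiableAt ℝ G x) :
    diverg (fun y => f y • G y) x = ⟪gradient f x, G x⟫ + f x * diverg G x := by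
  unfold diverg
  have key : ∀ i : Fin n, fderiv ℝ (fun y => f y • G y) x (EuclideanSpace.single i 1) i
      = fderiv ℝ f x (EuclideanSpace.single i 1) * G x i
        + f x * fderiv ℝ G x (EuclideanSpace.single i 1) i := by
    intro i
    rw [fderiv_fun_smul hf hG]
    simp [PiLp.add_apply, PiLp.smul_apply, smul_eq_mul, mul_comm, add_comm]
  rw [Finset.sum_congr rfl (fun i _ => key i), Finset.sum_add_distrib, ← Finset.mul_sum]
  congr 1
  rw [PiLp.inner_apply]
  exact Finset.sum_congr rfl (fun i _ => by rw [grad_coord]; simp; ring)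

theorem diverg_add4 (A B C D : EuclideanSpace ℝ (Fin n) → EuclideanSpace ℝ (Fin n))
    (x : EuclideanSpace ℝ (Fin n)) (hA : DifferentiableAt ℝ A x) (hB : DifferentiableAt ℝ B x)
    (hC : DifferentiableAt ℝ C x) (hD : DifferentiableAt ℝ D x) :
    diverg (fun y => A y + B y + C y + D y) x
      = diverg A x + diverg B x + diverg C x + diverg D x := by
  unfold diverg
  rw [← Finset.sum_add_distrib, ← Finset.sum_add_distrib, ← Finset.sum_add_distrib]
  refine Finset.sum_congr rfl (fun i _ => ?_)
  rw [fderiv_fun_add (f := fun y => A y + B y + C y) ((hA.add hB).add hC) hD,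
    fderiv_fun_add (f := fun y => A y + B y) (hA.add hB) hC, fderiv_fun_add hA hB]
  simp

theorem diverg_id (x : EuclideanSpace ℝ (Fin n)) : diverg (fun y => y) x = n := by
  unfold diverg
  simp [fderiv_id', EuclideanSpace.single_apply]

theorem diverg_gradient (f : EuclideanSpace ℝ (Fin n) → ℝ) (x : EuclideanSpace ℝ (Fin n))
    (hf : ContDiff ℝ 2 f) : diverg (gradient f) x = laplacian f x := by
  have hd1 : Differentiable ℝ (fderiv ℝ f) :=
    (hf.fderiv_right (m := 1) (by norm_num)).differentiable (by norm_num)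
  have hgd : DifferentiableAt ℝ (gradient f) x :=
    ((contDiff_gradient f (m := 1) hf (by norm_num)).differentiable (by norm_num)).differentiableAt
  unfold diverg
  rw [lap_eq]
  refine Finset.sum_congr rfl (fun i _ => ?_)
  rw [fderiv_coord _ _ _ _ hgd]
  have : (fun y => gradient f y i) = fun y => fderiv ℝ f y (EuclideanSpace.single i 1) :=
    funext (fun y => grad_coord f y i)
  rw [this, fderiv_eval _ _ _ _ (hd1.differentiableAt)]

theorem euclid_decomp (x : EuclideanSpace ℝ (Fin n)) :
    x = ∑ j : Fin n, x j • EuclideanSpace.single j (1:ℝ) := by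
  ext i
  rw [show (∑ j : Fin n, x j • EuclideanSpace.single j (1:ℝ)) i
    = EuclideanSpace.proj (𝕜 := ℝ) i (∑ j : Fin n, x j • EuclideanSpace.single j (1:ℝ)) from rfl,
    map_sum]
  simp [EuclideanSpace.single_apply]

theorem clm_decomp (L : EuclideanSpace ℝ (Fin n) →L[ℝ] ℝ) (x : EuclideanSpace ℝ (Fin n)) :
    L x = ∑ j : Fin n, x j * L (EuclideanSpace.single j 1) := by
  conv_lhs => rw [euclid_decomp x]
  rw [map_sum]
  exact Finset.sum_congr rfl (fun j _ => by rw [_root_.map_smul]; rfl)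

theorem lap_comm (u : EuclideanSpace ℝ (Fin n) → ℝ) (hu : ContDiff ℝ 4 u)
    (x : EuclideanSpace ℝ (Fin n)) :
    laplacian (fun y => fderiv ℝ u y y) x = fderiv ℝ (laplacian u) x x + 2 * laplacian u x := by
  set f1 := fderiv ℝ u with hf1def
  set f2 := fderiv ℝ f1 with hf2def
  set f3 := fderiv ℝ f2 with hf3def
  have hf1 : ContDiff ℝ 3 f1 := hu.fderiv_right (m := 3) (by norm_num)
  have hf2 : ContDiff ℝ 2 f2 := hf1.fderiv_right (m := 2) (by norm_num)
  have hd1 : Differentiable ℝ f1 := hf1.differentiable (by norm_num)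
  have hd2 : Differentiable ℝ f2 := hf2.differentiable (by norm_num)
  set e : Fin n → EuclideanSpace ℝ (Fin n) := fun i => EuclideanSpace.single i 1 with he
  have hccd : ∀ y v, fderiv ℝ (fun z => f1 z z) y v = f1 y v + f2 y v y := by
    intro y v
    rw [fderiv_clm_apply (hd1 y) differentiableAt_fun_id]
    simp [f2]
  have hcc : ContDiff ℝ 3 (fun z => f1 z z) := hf1.clm_apply contDiff_id
  have heval2 : ∀ (b v : EuclideanSpace ℝ (Fin n)),
      fderiv ℝ (fun y => f2 y b) x v = f3 x v b :=
    fun b v => fderiv_eval f2 x v b (hd2 x)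
  have heval2' : ∀ (b c v : EuclideanSpace ℝ (Fin n)),
      fderiv ℝ (fun y => f2 y b c) x v = f3 x v b c := by
    intro b c v
    rw [fderiv_eval (fun y => f2 y b) x v c
      ((hf2.clm_apply contDiff_const).differentiable (by norm_num) x), heval2]
  have S1 : ∀ a b, f3 x a b = f3 x b a := fun a b =>
    second_derivative_symmetric (fun y => (hd1 y).hasFDerivAt) (hd2 x).hasFDerivAt a b
  have S2 : ∀ y b c, f2 y b c = f2 y c b := fun y b c =>
    second_derivative_symmetric
      (fun z => ((hu.differentiable (by norm_num)) z).hasFDerivAt) (hd1 y).hasFDerivAt b c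
  have S3 : ∀ a b c, f3 x a b c = f3 x a c b := by
    intro a b c
    have hfun : (fun y => f2 y b c) = (fun y => f2 y c b) := funext fun y => S2 y b c
    rw [← heval2' b c a, hfun, heval2']
  have key : ∀ i : Fin n,
      fderiv ℝ (fderiv ℝ (fun z => f1 z z)) x (e i) (e i)
        = 2 * f2 x (e i) (e i) + f3 x (e i) (e i) x := by
    intro i
    rw [← fderiv_eval (fderiv ℝ (fun z => f1 z z)) x (e i) (e i)
      ((hcc.fderiv_right (m := 2) (by norm_num)).differentiable (by norm_num) x)]
    have h1 : (fun y => fderiv ℝ (fun z => f1 z z) y (e i))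
        = fun y => f1 y (e i) + f2 y (e i) y := funext fun y => hccd y (e i)
    rw [h1]
    have hda : DifferentiableAt ℝ (fun y => f1 y (e i)) x :=
      (hf1.clm_apply contDiff_const).differentiable (by norm_num) x
    have hdb : DifferentiableAt ℝ (fun y => f2 y (e i) y) x :=
      ((hf2.clm_apply contDiff_const).clm_apply contDiff_id).differentiable (by norm_num) x
    rw [fderiv_fun_add hda hdb]
    have h2 : fderiv ℝ (fun y => f1 y (e i)) x (e i) = f2 x (e i) (e i) :=
      fderiv_eval f1 x (e i) (e i) (hd1.differentiableAt)
    have h3 : fderiv ℝ (fun y => f2 y (e i) y) x (e i)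
        = f2 x (e i) (e i) + f3 x (e i) (e i) x := by
      rw [fderiv_clm_apply ((hf2.clm_apply contDiff_const).differentiable (by norm_num) x)
        differentiableAt_fun_id]
      simp only [ContinuousLinearMap.add_apply, ContinuousLinearMap.comp_apply,
        ContinuousLinearMap.flip_apply, fderiv_id', ContinuousLinearMap.coe_id', id_eq]
      rw [heval2]
    simp only [ContinuousLinearMap.add_apply, h2, h3]
    ring
  have hlap : fderiv ℝ (laplacian u) x x = ∑ i : Fin n, f3 x x (e i) (e i) := by
    rw [lap_eq]
    rw [fderiv_fun_sum (fun i _ =>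
      ((hf2.clm_apply contDiff_const).clm_apply contDiff_const).differentiable (by norm_num) x)]
    rw [ContinuousLinearMap.sum_apply]
    exact Finset.sum_congr rfl (fun i _ => heval2' (e i) (e i) x)
  rw [lap_eq, hlap]
  calc ∑ i : Fin n, fderiv ℝ (fderiv ℝ (fun z => f1 z z)) x (e i) (e i)
      = ∑ i : Fin n, (2 * f2 x (e i) (e i) + f3 x (e i) (e i) x) :=
        Finset.sum_congr rfl (fun i _ => key i)
    _ = ∑ i : Fin n, f3 x (e i) (e i) x + 2 * ∑ i : Fin n, f2 x (e i) (e i) := by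
        rw [Finset.sum_add_distrib, ← Finset.mul_sum]; ring
    _ = ∑ i : Fin n, f3 x x (e i) (e i) + 2 * laplacian u x := by
        rw [lap_eq]
        congr 1
        refine Finset.sum_congr rfl (fun i _ => ?_)
        have hM : ∀ (M : EuclideanSpace ℝ (Fin n) →L[ℝ]
              (EuclideanSpace ℝ (Fin n) →L[ℝ] EuclideanSpace ℝ (Fin n) →L[ℝ] ℝ)) (a b),
            M x a b = ∑ j : Fin n, x j * M (e j) a b := by
          intro M a b
          conv_lhs => rw [euclid_decomp x]
          rw [map_sum, ContinuousLinearMap.sum_apply, ContinuousLinearMap.sum_apply]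
          exact Finset.sum_congr rfl (fun j _ => by
            simp [ContinuousLinearMap.smul_apply, he])
        rw [clm_decomp (f3 x (e i) (e i)) x, hM (f3 x) (e i) (e i)]
        exact Finset.sum_congr rfl (fun j _ => by
          rw [S3 (e i) (e i) (e j), S1 (e i) (e j)])

end PohozaevAux


open PohozaevAux in
/-- Pohozaev-type identity on a bounded domain `Ω` with smooth boundary.  The smooth boundary
structure is encoded by a surface measure `σ` on `frontier Ω` and an outward unit normal field
`ν` for which the divergence theorem holds for `C¹` vector fields. -/
theorem stmt_8 (n : ℕ) (hn : 5 ≤ n)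
    (Ω : Set (EuclideanSpace ℝ (Fin n))) (hΩopen : IsOpen Ω)
    (hΩbdd : Bornology.IsBounded Ω)
    (σ : Measure (EuclideanSpace ℝ (Fin n)))
    (ν : EuclideanSpace ℝ (Fin n) → EuclideanSpace ℝ (Fin n))
    (hν : ∀ x ∈ frontier Ω, ‖ν x‖ = 1)
    (hdiv : ∀ F : EuclideanSpace ℝ (Fin n) → EuclideanSpace ℝ (Fin n), ContDiff ℝ 1 F →
      ∫ x in Ω, diverg F x = ∫ x in frontier Ω, ⟪F x, ν x⟫ ∂σ)
    (u : EuclideanSpace ℝ (Fin n) → ℝ) (hu : ContDiff ℝ 4 u) :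
    ∫ x in Ω, (⟪x, gradient u x⟫ + (((n : ℝ) - 4) / 2) * u x) * laplacian (laplacian u) x
      = ∫ x in frontier Ω,
          ((((n : ℝ) - 4) / 2) * (u x * fderiv ℝ (laplacian u) x (ν x)
              - laplacian u x * fderiv ℝ u x (ν x))
            + ⟪x, gradient u x⟫ * fderiv ℝ (laplacian u) x (ν x)
            - fderiv ℝ (fun z => ⟪z, gradient u z⟫) x (ν x) * laplacian u x
            + (1 / 2) * (laplacian u x) ^ 2 * ⟪x, ν x⟫) ∂σ := by
  have hdu : Differentiable ℝ u := hu.differentiable (by norm_num)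
  have hcc_eq : (fun z => (⟪z, gradient u z⟫ : ℝ)) = fun y => fderiv ℝ u y y := by
    funext z
    rw [real_inner_comm, ← grad_fderiv]
  have hcc3 : ContDiff ℝ 3 (fun z => (⟪z, gradient u z⟫ : ℝ)) := by
    rw [hcc_eq]
    exact (hu.fderiv_right (m := 3) (by norm_num)).clm_apply contDiff_id
  have hlap2 : ContDiff ℝ 2 (laplacian u) := by
    rw [lap_eq]
    exact ContDiff.sum fun i _ =>
      (((hu.fderiv_right (m := 3) (by norm_num)).fderiv_right (m := 2)
        (by norm_num)).clm_apply contDiff_const).clm_apply contDiff_const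
  have hdlap : Differentiable ℝ (laplacian u) := hlap2.differentiable (by norm_num)
  have hgradlap : ContDiff ℝ 1 (gradient (laplacian u)) :=
    contDiff_gradient _ hlap2 (by norm_num)
  have hgradu1 : ContDiff ℝ 1 (gradient u) := contDiff_gradient _ hu (by norm_num)
  have hgradcc : ContDiff ℝ 1 (gradient (fun z => (⟪z, gradient u z⟫ : ℝ))) :=
    contDiff_gradient _ hcc3 (by norm_num)
  set k : ℝ := ((n : ℝ) - 4) / 2 with hk
  set F : EuclideanSpace ℝ (Fin n) → EuclideanSpace ℝ (Fin n) := fun y =>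
      (k * u y + ⟪y, gradient u y⟫) • gradient (laplacian u) y
      + (-(k * laplacian u y)) • gradient u y
      + (-laplacian u y) • gradient (fun z => (⟪z, gradient u z⟫ : ℝ)) y
      + ((1/2) * laplacian u y ^ 2) • y with hFdef
  have hs1 : ContDiff ℝ 1 (fun y => k * u y + ⟪y, gradient u y⟫) :=
    (contDiff_const.mul (hu.of_le (by norm_num))).add (hcc3.of_le (by norm_num))
  have hs2 : ContDiff ℝ 1 (fun y => -(k * laplacian u y)) :=
    ((contDiff_const.mul hlap2).neg).of_le (by norm_num)
  have hs3 : ContDiff ℝ 1 (fun y => -laplacian u y) := (hlap2.neg).of_le (by norm_num)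
  have hs4 : ContDiff ℝ 1 (fun y => (1/2) * laplacian u y ^ 2) :=
    (contDiff_const.mul (hlap2.pow 2)).of_le (by norm_num)
  have hF1 : ContDiff ℝ 1 F := by
    rw [hFdef]
    exact (((hs1.smul hgradlap).add (hs2.smul hgradu1)).add (hs3.smul hgradcc)).add
      (hs4.smul contDiff_id)
  have hdivF : ∀ x, (⟪x, gradient u x⟫ + k * u x) * laplacian (laplacian u) x = diverg F x := by
    intro x
    rw [hFdef]
    rw [diverg_add4
      (fun y => (k * u y + ⟪y, gradient u y⟫) • gradient (laplacian u) y)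
      (fun y => (-(k * laplacian u y)) • gradient u y)
      (fun y => (-laplacian u y) • gradient (fun z => (⟪z, gradient u z⟫ : ℝ)) y)
      (fun y => ((1/2) * laplacian u y ^ 2) • y) x
      ((hs1.smul hgradlap).differentiable one_ne_zero x)
      ((hs2.smul hgradu1).differentiable one_ne_zero x)
      ((hs3.smul hgradcc).differentiable one_ne_zero x)
      (show DifferentiableAt ℝ (fun y => ((1/2) * laplacian u y ^ 2) • y) x from
        (hs4.smul contDiff_id).differentiable one_ne_zero x)]
    rw [diverg_smul (fun y => k * u y + ⟪y, gradient u y⟫) (gradient (laplacian u)) x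
        (hs1.differentiable one_ne_zero x) (hgradlap.differentiable one_ne_zero x),
      diverg_smul (fun y => -(k * laplacian u y)) (gradient u) x
        (hs2.differentiable one_ne_zero x) (hgradu1.differentiable one_ne_zero x),
      diverg_smul (fun y => -laplacian u y)
        (gradient (fun z => (⟪z, gradient u z⟫ : ℝ))) x
        (hs3.differentiable one_ne_zero x) (hgradcc.differentiable one_ne_zero x),
      diverg_smul (fun y => (1/2) * laplacian u y ^ 2) (fun y => y) x
        (hs4.differentiable one_ne_zero x) differentiableAt_fun_id]
    rw [diverg_gradient _ x hlap2, diverg_gradient _ x (hu.of_le (by norm_num)),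
      diverg_gradient _ x (hcc3.of_le (by norm_num)), diverg_id x]
    rw [← grad_fderiv (fun y => k * u y + ⟪y, gradient u y⟫) x (gradient (laplacian u) x),
      ← grad_fderiv (fun y => -(k * laplacian u y)) x (gradient u x),
      ← grad_fderiv (fun y => -laplacian u y) x
        (gradient (fun z => (⟪z, gradient u z⟫ : ℝ)) x),
      ← grad_fderiv (fun y => (1/2) * laplacian u y ^ 2) x x]
    have e1 : fderiv ℝ (fun y => k * u y + ⟪y, gradient u y⟫) x (gradient (laplacian u) x)
        = k * fderiv ℝ u x (gradient (laplacian u) x)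
          + fderiv ℝ (fun z => (⟪z, gradient u z⟫ : ℝ)) x (gradient (laplacian u) x) := by
      rw [fderiv_fun_add (f := fun y => k * u y) ((hdu x).const_mul k) ((hcc3.differentiable (by norm_num)) x),
        fderiv_const_mul (hdu x)]
      simp
    have e2 : fderiv ℝ (fun y => -(k * laplacian u y)) x (gradient u x)
        = -(k * fderiv ℝ (laplacian u) x (gradient u x)) := by
      rw [fderiv_fun_neg, fderiv_const_mul (hdlap x)]
      simp
    have e3 : fderiv ℝ (fun y => -laplacian u y) x
          (gradient (fun z => (⟪z, gradient u z⟫ : ℝ)) x)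
        = -(fderiv ℝ (laplacian u) x (gradient (fun z => (⟪z, gradient u z⟫ : ℝ)) x)) := by
      rw [fderiv_fun_neg]
      simp
    have e4 : fderiv ℝ (fun y => (1/2) * laplacian u y ^ 2) x x
        = laplacian u x * fderiv ℝ (laplacian u) x x := by
      have hsq : (fun y => laplacian u y ^ 2) = fun y => laplacian u y * laplacian u y :=
        funext fun y => sq (laplacian u y)
      rw [fderiv_const_mul (by rw [hsq]; exact (hdlap x).mul (hdlap x)), hsq,
        fderiv_fun_mul (hdlap x) (hdlap x)]
      simp only [ContinuousLinearMap.add_apply, ContinuousLinearMap.smul_apply, smul_eq_mul]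
      ring
    have hsym1 : fderiv ℝ (laplacian u) x (gradient u x)
        = fderiv ℝ u x (gradient (laplacian u) x) := by
      rw [grad_fderiv, grad_fderiv, real_inner_comm]
    have hsym2 : fderiv ℝ (laplacian u) x (gradient (fun z => (⟪z, gradient u z⟫ : ℝ)) x)
        = fderiv ℝ (fun z => (⟪z, gradient u z⟫ : ℝ)) x (gradient (laplacian u) x) := by
      rw [grad_fderiv, grad_fderiv, real_inner_comm]
    have hcomm : laplacian (fun z => (⟪z, gradient u z⟫ : ℝ)) x
        = fderiv ℝ (laplacian u) x x + 2 * laplacian u x := by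
      rw [hcc_eq]
      exact lap_comm u hu x
    rw [e1, e2, e3, e4, hsym1, hsym2, hcomm, hk]
    ring
  rw [show (fun x => (⟪x, gradient u x⟫ + k * u x) * laplacian (laplacian u) x)
      = fun x => diverg F x from funext hdivF]
  rw [hdiv F hF1]
  congr 1
  funext x
  rw [hFdef]
  simp only []
  rw [inner_add_left, inner_add_left, inner_add_left, real_inner_smul_left,
    real_inner_smul_left, real_inner_smul_left, real_inner_smul_left,
    ← grad_fderiv (laplacian u) x (ν x), ← grad_fderiv u x (ν x),
    ← grad_fderiv (fun z => (⟪z, gradient u z⟫ : ℝ)) x (ν x)]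
  ring
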